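/- Let g be C² with g(0)=0, g'(0)=1. If g(x)² - 2 G(x) g'(x) > 0 for all x ≠ 0 in a neighborhood of 0, where G(x)=∫₀ˣ g(t)dt, then g''(0) = 0. -/

import Mathlib

open Metric Filter

theorem necessary_g''0_eq_zero (g : ℝ → ℝ) (hg : ContDiff ℝ 2 g)
    (h0 : g 0 = 0) (h1 : deriv g 0 = 1)
    (G : ℝ → ℝ) (hG : ∀ x, G x = ∫ t in (0:ℝ)..x, g t)
    (hyp : ∃ ε > 0, ∀ x : ℝ, x ≠ 0 → |x| < ε →
      g x ^ 2 - 2 * G x * deriv g x > 0) :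
    iteratedDeriv 2 g 0 = 0 := by
  obtain ⟨ε, hε, hyp⟩ := hyp
  have hgdiff : Differentiable ℝ g := hg.differentiable (by norm_num)
  have hcontg : Continuous g := hgdiff.continuous
  have hdg1 : ContDiff ℝ 1 (deriv g) := by
    have h2 : ContDiff ℝ ((1:ℕ) + 1) g := by exact_mod_cast hg
    exact (contDiff_succ_iff_deriv.mp h2).2.2
  have hdgdiff : Differentiable ℝ (deriv g) := hdg1.differentiable (by norm_num)
  have hc : Continuous (deriv (deriv g)) := (contDiff_one_iff_deriv.mp hdg1).2
  set c := deriv (deriv g) with hc_def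
  have ha2 : iteratedDeriv 2 g 0 = c 0 := by
    rw [show (2:ℕ) = 1 + 1 from rfl, iteratedDeriv_succ, iteratedDeriv_one]
  rw [ha2]
  by_contra ha
  -- G facts
  have hGfun : G = fun u => ∫ t in (0:ℝ)..u, g t := funext hG
  have hGd : ∀ x : ℝ, HasDerivAt G (g x) x := by
    intro x
    rw [hGfun]
    exact intervalIntegral.integral_hasDerivAt_right
      (hcontg.intervalIntegrable _ _)
      (hcontg.aestronglyMeasurable.stronglyMeasurableAtFilter)
      hcontg.continuousAt
  have hG0 : G 0 = 0 := by rw [hG 0, intervalIntegral.integral_same]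
  have hGcont : Continuous G :=
    continuous_iff_continuousAt.mpr fun x => (hGd x).continuousAt
  -- sign of g near 0 (punctured)
  have hder0 : HasDerivAt g 1 0 := h1 ▸ (hgdiff 0).hasDerivAt
  have hslope : Tendsto (slope g 0) (nhdsWithin 0 {(0:ℝ)}ᶜ) (nhds 1) :=
    hasDerivAt_iff_tendsto_slope.mp hder0
  have hgpos : ∀ᶠ t in nhdsWithin 0 {(0:ℝ)}ᶜ, 0 < g t / t := by
    have := hslope.eventually (lt_mem_nhds (show (0:ℝ) < 1 by norm_num))
    filter_upwards [this] with t ht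
    simpa [slope, h0, sub_zero, div_eq_inv_mul] using ht
  -- sign of c near 0
  have hcc : ∀ᶠ t in nhdsWithin 0 {(0:ℝ)}ᶜ, |c t - c 0| < |c 0| := by
    apply eventually_nhdsWithin_of_eventually_nhds
    have := Metric.tendsto_nhds.mp (hc.continuousAt (x := 0)) (|c 0|) (abs_pos.mpr ha)
    filter_upwards [this] with t ht
    simpa [Real.dist_eq] using ht
  obtain ⟨δ₀, hδ₀, hball⟩ := Metric.mem_nhdsWithin_iff.mp (hgpos.and hcc)
  set δ : ℝ := min δ₀ ε with hδdef
  have hδpos : 0 < δ := lt_min hδ₀ hε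
  have hkey : ∀ t : ℝ, t ≠ 0 → |t| < δ → 0 < g t / t ∧ |c t - c 0| < |c 0| := by
    intro t ht htδ
    exact hball ⟨by simpa [Real.dist_eq] using lt_of_lt_of_le htδ (min_le_left _ _), ht⟩
  -- g sign
  have hgsign_pos : ∀ t : ℝ, 0 < t → t < δ → 0 < g t := by
    intro t ht htδ
    have := (hkey t ht.ne' (by rwa [abs_of_pos ht])).1
    rcases div_pos_iff.mp this with ⟨h, _⟩ | ⟨_, h⟩
    · exact h
    · linarith
  have hgsign_neg : ∀ t : ℝ, -δ < t → t < 0 → g t < 0 := by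
    intro t htδ ht
    have := (hkey t ht.ne (by rw [abs_of_neg ht]; linarith)).1
    rcases div_pos_iff.mp this with ⟨_, h⟩ | ⟨h, _⟩
    · linarith
    · exact h
  -- G positivity on punctured (-δ, δ)
  have hGpos : ∀ t : ℝ, t ≠ 0 → |t| < δ → 0 < G t := by
    intro t ht htδ
    rcases ht.lt_or_gt with htneg | htpos
    · -- t < 0 : G strictly anti on [t, 0]
      have habs : -δ < t := by rw [abs_of_neg htneg] at htδ; linarith
      have hanti : StrictAntiOn G (Set.Icc t 0) := by
        apply strictAntiOn_of_deriv_neg (convex_Icc t 0) (hGcont.continuousOn)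
        intro x hx
        rw [interior_Icc] at hx
        rw [(hGd x).deriv]
        exact hgsign_neg x (by linarith [hx.1]) hx.2
      have := hanti ⟨le_refl t, htneg.le⟩ ⟨htneg.le, le_refl 0⟩ htneg
      rwa [hG0] at this
    · -- 0 < t : G strictly mono on [0, t]
      have habs : t < δ := by rwa [abs_of_pos htpos] at htδ
      have hmono : StrictMonoOn G (Set.Icc 0 t) := by
        apply strictMonoOn_of_deriv_pos (convex_Icc 0 t) (hGcont.continuousOn)
        intro x hx
        rw [interior_Icc] at hx
        rw [(hGd x).deriv]
        exact hgsign_pos x hx.1 (by linarith [hx.2])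
      have := hmono ⟨le_refl 0, htpos.le⟩ ⟨htpos.le, le_refl t⟩ htpos
      rwa [hG0] at this
  -- F and its derivative
  set F : ℝ → ℝ := fun x => g x ^ 2 - 2 * G x * deriv g x with hF_def
  have hFd : ∀ x : ℝ, HasDerivAt F (-2 * G x * c x) x := by
    intro x
    have h1' : HasDerivAt (fun x => g x ^ 2) (2 * g x * deriv g x) x := by
      have := (hgdiff x).hasDerivAt.fun_pow 2
      simpa using this
    have h2' : HasDerivAt (fun x => 2 * G x * deriv g x)
        (2 * g x * deriv g x + 2 * G x * c x) x := by
      have := (((hGd x).const_mul 2).fun_mul (hdgdiff x).hasDerivAt)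
      convert this using 1
      try ring
    have := h1'.fun_sub h2'
    exact this.congr_deriv (by ring)
  have hFcont : Continuous F := continuous_iff_continuousAt.mpr fun x => (hFd x).continuousAt
  have hF0 : F 0 = 0 := by simp [hF_def, h0, hG0]
  -- c sign dichotomy
  rcases lt_or_gt_of_ne ha with hcneg | hcpos
  · -- c 0 < 0 : c t < 0 near 0, F' > 0 on (-δ/2, 0), so F(-δ/2) < F 0 = 0
    have hcsign : ∀ t : ℝ, t ≠ 0 → |t| < δ → c t < 0 := by
      intro t ht htδ
      have := (hkey t ht htδ).2
      rw [abs_of_neg hcneg] at this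
      cases abs_lt.mp this with
      | intro hl hr => linarith
    have hmono : StrictMonoOn F (Set.Icc (-(δ/2)) 0) := by
      apply strictMonoOn_of_deriv_pos (convex_Icc _ _) hFcont.continuousOn
      intro x hx
      rw [interior_Icc] at hx
      have hx0 : x ≠ 0 := hx.2.ne
      have hxδ : |x| < δ := by rw [abs_of_neg hx.2]; linarith [hx.1]
      rw [(hFd x).deriv]
      have hGx := hGpos x hx0 hxδ
      have hcx := hcsign x hx0 hxδ
      nlinarith
    have hlt : F (-(δ/2)) < 0 := by
      have := hmono (Set.mem_Icc.mpr ⟨le_refl _, by linarith⟩)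
        (Set.mem_Icc.mpr ⟨by linarith, le_refl 0⟩) (by linarith)
      rwa [hF0] at this
    have := hyp (-(δ/2)) (by intro h; nlinarith [hδpos])
      (by rw [abs_of_neg (by linarith)]; have := min_le_right δ₀ ε; simp only [hδdef] at *; linarith)
    simp only [hF_def] at hlt
    linarith
  · -- c 0 > 0 : c t > 0 near 0, F' < 0 on (0, δ/2), so F(δ/2) < F 0 = 0
    have hcsign : ∀ t : ℝ, t ≠ 0 → |t| < δ → 0 < c t := by
      intro t ht htδ
      have := (hkey t ht htδ).2
      rw [abs_of_pos hcpos] at this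
      cases abs_lt.mp this with
      | intro hl hr => linarith
    have hanti : StrictAntiOn F (Set.Icc 0 (δ/2)) := by
      apply strictAntiOn_of_deriv_neg (convex_Icc _ _) hFcont.continuousOn
      intro x hx
      rw [interior_Icc] at hx
      have hx0 : x ≠ 0 := hx.1.ne'
      have hxδ : |x| < δ := by rw [abs_of_pos hx.1]; linarith [hx.2]
      rw [(hFd x).deriv]
      have hGx := hGpos x hx0 hxδ
      have hcx := hcsign x hx0 hxδ
      nlinarith
    have hlt : F (δ/2) < 0 := by
      have := hanti (Set.mem_Icc.mpr ⟨le_refl 0, by linarith⟩)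
        (Set.mem_Icc.mpr ⟨by linarith, le_refl _⟩) (by linarith)
      rwa [hF0] at this
    have := hyp (δ/2) (by positivity)
      (by rw [abs_of_pos (by linarith)]; have := min_le_right δ₀ ε; simp only [hδdef] at *; linarith)
    simp only [hF_def] at hlt
    linarith
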